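/- arXiv:0706.0604 — 3 statements merged into one kernel-verified Lean document; each statement's English description precedes it below -/
import Mathlib

section
/- Let $r \geq 1$ and let $C$ be a commutative ring graded by the additive monoid $\mathbb{N}^r$, i.e. $C = \bigoplus_{I \in \mathbb{N}^r} C_I$ with $C_I \cdot C_J \subseteq C_{I+J}$, such that $C$ is generated as a ring by the component $C_0$ together with the components $C_{e_1}, \dots, C_{e_r}$, where $e_1, \dots, e_r$ is the standard basis of $\mathbb{N}^r$. Let $M$ be a $C$-module that is finitely generated over $C$ and carries a $\mathbb{Z}^r$-grading $M = \bigoplus_{J \in \mathbb{Z}^r} M_J$ by additive subgroups satisfying $C_I \cdot M_J \subseteq M_{I+J}$ for all $I \in \mathbb{N}^r$, $J \in \mathbb{Z}^r$. Write $E = (1,1,\dots,1) \in \mathbb{Z}^r$. If there exists $n_0$ such that $M_{nE} = 0$ for all integers $n \geq n_0$, then there exists $n_1$ such that $M_J = 0$ for every $J \in \mathbb{Z}^r$ with $J \geq n_1 E$ (componentwise). -/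
open DirectSum

section Aux

variable {r : ℕ} {C : Type*} [CommRing C]

/-- The additive subgroup of products `b * a` with `b` of degree `e_q` and `a` of
degree `I - e_q`. -/
private def Tgt (𝒞 : (Fin r → ℕ) → AddSubgroup C) (q : Fin r) (I : Fin r → ℕ) : AddSubgroup C :=
  AddSubgroup.closure
    {x : C | ∃ b ∈ 𝒞 (Pi.single q 1), ∃ a ∈ 𝒞 (I - Pi.single q 1), x = b * a}

variable (𝒞 : (Fin r → ℕ) → AddSubgroup C) [GradedRing 𝒞]

private lemma sub_add_single (q : Fin r) (A B : Fin r → ℕ) (hA : 1 ≤ A q) :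
    (A - Pi.single q 1) + B = (A + B) - Pi.single q 1 := by
  funext q'
  rcases eq_or_ne q' q with h | h
  · subst h
    simp only [Pi.add_apply, Pi.sub_apply, Pi.single_eq_same]
    omega
  · simp [Pi.single_eq_of_ne h]

private lemma Tgt_mul (q : Fin r) {A B : Fin r → ℕ} (hA : 1 ≤ A q) {t z : C}
    (hz : z ∈ 𝒞 B) (ht : t ∈ Tgt 𝒞 q A) : t * z ∈ Tgt 𝒞 q (A + B) := by
  refine AddSubgroup.closure_induction (p := fun x _ => x * z ∈ Tgt 𝒞 q (A + B)) ?_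
    (by show (0:C) * z ∈ Tgt 𝒞 q (A + B); rw [zero_mul]; exact zero_mem _)
    (fun x y _ _ px py => by show (x + y) * z ∈ Tgt 𝒞 q (A + B); rw [add_mul]; exact add_mem px py)
    (fun x _ px => by show (-x) * z ∈ Tgt 𝒞 q (A + B); rw [neg_mul]; exact neg_mem px) ht
  rintro x ⟨b, hb, a, ha, rfl⟩
  refine AddSubgroup.subset_closure ⟨b, hb, a * z, ?_, by ring⟩
  have h := SetLike.mul_mem_graded ha hz
  rwa [sub_add_single q A B hA] at h

private lemma mem_Tgt
    (hgen : Subring.closure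
      ((𝒞 0 : Set C) ∪ ⋃ q : Fin r, (𝒞 (Pi.single q 1) : Set C)) = ⊤)
    (q : Fin r) (I : Fin r → ℕ) (hI : 1 ≤ I q) (c : C) (hc : c ∈ 𝒞 I) :
    c ∈ Tgt 𝒞 q I := by
  classical
  have key : ∀ x : C, ∀ I : Fin r → ℕ, 1 ≤ I q → (decompose 𝒞 x I : C) ∈ Tgt 𝒞 q I := by
    intro x
    have hx : x ∈ Subring.closure
        ((𝒞 0 : Set C) ∪ ⋃ q : Fin r, (𝒞 (Pi.single q 1) : Set C)) := by
      rw [hgen]; trivial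
    refine Subring.closure_induction
      (p := fun x _ => ∀ I : Fin r → ℕ, 1 ≤ I q → (decompose 𝒞 x I : C) ∈ Tgt 𝒞 q I)
      ?_ ?_ ?_ ?_ ?_ ?_ hx
    · -- mem
      intro y hy I hI
      rcases hy with hy | hy
      · have hne : (0 : Fin r → ℕ) ≠ I := by
          intro h
          have := congrFun h q
          simp only [Pi.zero_apply] at this
          omega
        rw [decompose_of_mem_ne 𝒞 hy hne]
        exact zero_mem _
      · obtain ⟨q', hy⟩ := Set.mem_iUnion.mp hy
        by_cases hqI : Pi.single q' 1 = I
        · have hq'q : q' = q := by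
            by_contra h
            have h2 := congrFun hqI q
            rw [Pi.single_eq_of_ne (fun hh => h hh.symm)] at h2
            omega
          subst hq'q
          rw [decompose_of_mem_same 𝒞 (hqI ▸ hy)]
          refine AddSubgroup.subset_closure ⟨y, hqI ▸ hy, 1, ?_, (mul_one y).symm⟩
          have hI0 : I - Pi.single q' 1 = 0 := by
            rw [← hqI]; simp
          rw [hI0]
          exact SetLike.one_mem_graded 𝒞
        · rw [decompose_of_mem_ne 𝒞 hy hqI]
          exact zero_mem _
    · -- zero
      intro I hI
      rw [decompose_zero]
      simp only [DirectSum.zero_apply, ZeroMemClass.coe_zero]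
      exact zero_mem _
    · -- one
      intro I hI
      have hne : (0 : Fin r → ℕ) ≠ I := by
        intro h
        have := congrFun h q
        simp only [Pi.zero_apply] at this
        omega
      rw [decompose_of_mem_ne 𝒞 (SetLike.one_mem_graded 𝒞) hne]
      exact zero_mem _
    · -- add
      intro x y _ _ px py I hI
      rw [decompose_add, DirectSum.add_apply, AddMemClass.coe_add]
      exact add_mem (px I hI) (py I hI)
    · -- neg
      intro x _ px I hI
      have hneg : decompose 𝒞 (-x) = -decompose 𝒞 x := map_neg (decomposeAddEquiv 𝒞) x
      rw [hneg, DFinsupp.neg_apply, NegMemClass.coe_neg]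
      exact neg_mem (px I hI)
    · -- mul
      intro x y _ _ px py I hI
      rw [decompose_mul, DirectSum.coe_mul_apply]
      refine sum_mem ?_
      intro ij hij
      obtain ⟨-, hsum⟩ := Finset.mem_filter.mp hij
      have hq : 1 ≤ ij.1 q ∨ 1 ≤ ij.2 q := by
        have := congrFun hsum q
        simp only [Pi.add_apply] at this
        omega
      rcases hq with hq | hq
      · have h := Tgt_mul 𝒞 q hq (SetLike.coe_mem (decompose 𝒞 y ij.2)) (px ij.1 hq)
        rwa [hsum] at h
      · have h := Tgt_mul 𝒞 q hq (SetLike.coe_mem (decompose 𝒞 x ij.1)) (py ij.2 hq)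
        rw [mul_comm]
        have hsum' : ij.2 + ij.1 = I := by rw [add_comm]; exact hsum
        rwa [hsum'] at h
  have h := key c I hI
  rwa [decompose_of_mem_same 𝒞 hc] at h


private lemma vanish
    (hgen : Subring.closure
      ((𝒞 0 : Set C) ∪ ⋃ q : Fin r, (𝒞 (Pi.single q 1) : Set C)) = ⊤)
    {M : Type*} [AddCommGroup M] [Module C M]
    (ℳ : (Fin r → ℤ) → AddSubgroup M) [DirectSum.Decomposition ℳ]
    (hcompat : ∀ (I : Fin r → ℕ) (J : Fin r → ℤ) (c : C) (m : M),
      c ∈ 𝒞 I → m ∈ ℳ J → c • m ∈ ℳ ((fun q => (I q : ℤ)) + J))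
    (n₀ : ℤ) (hdiag : ∀ n : ℤ, n₀ ≤ n → ℳ (fun _ => n) = ⊥)
    (n : ℤ) (hn : n₀ ≤ n) :
    ∀ (d : ℕ) (J₀ : Fin r → ℤ), (∑ q, (n - J₀ q).toNat) = d → (∀ q, J₀ q ≤ n) →
      ∀ (I : Fin r → ℕ), (∀ q, n ≤ I q + J₀ q) → ∀ c ∈ 𝒞 I, ∀ m ∈ ℳ J₀, c • m = 0 := by
  intro d
  induction d using Nat.strong_induction_on with
  | _ d IH =>
  intro J₀ hd hJ₀ I hI c hc m hm
  by_cases h : ∃ q, J₀ q < n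
  · obtain ⟨q, hq⟩ := h
    have hsingle : ∀ q' : Fin r, (Pi.single q 1 : Fin r → ℕ) q' = if q' = q then 1 else 0 := by
      intro q'
      rcases eq_or_ne q' q with h' | h'
      · subst h'; simp
      · simp [Pi.single_eq_of_ne h', h']
    have hIq : 1 ≤ I q := by have := hI q; omega
    have hcT := mem_Tgt 𝒞 hgen q I hIq c hc
    refine AddSubgroup.closure_induction (p := fun x _ => x • m = 0) ?_
      (by show (0:C) • m = 0; rw [zero_smul])
      (fun x y _ _ px py => by show (x + y) • m = 0; rw [add_smul, px, py, add_zero])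
      (fun x _ px => by show (-x) • m = 0; rw [neg_smul, px, neg_zero]) hcT
    rintro x ⟨b, hb, a, ha, rfl⟩
    rw [mul_comm, mul_smul]
    have hbm := hcompat (Pi.single q 1) J₀ b m hb hm
    set J₀' : Fin r → ℤ := (fun q' => ((Pi.single q 1 : Fin r → ℕ) q' : ℤ)) + J₀ with hJ₀'def
    have hq'eq : J₀' q = 1 + J₀ q := by
      simp [hJ₀'def, Pi.single_eq_same]
    have hne : ∀ q', q' ≠ q → J₀' q' = J₀ q' := by
      intro q' h5
      simp [hJ₀'def, Pi.single_eq_of_ne h5]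
    have hmono : ∀ q', J₀ q' ≤ J₀' q' := by
      intro q'
      rcases eq_or_ne q' q with h5 | h5
      · rw [h5]; omega
      · rw [hne q' h5]
    have hlt : (∑ q', (n - J₀' q').toNat) < d := by
      rw [← hd]
      refine Finset.sum_lt_sum (fun q' _ => ?_) ⟨q, Finset.mem_univ q, ?_⟩
      · have := hmono q'
        omega
      · omega
    refine IH _ hlt J₀' rfl (fun q' => ?_) (I - Pi.single q 1) (fun q' => ?_) a ha (b • m) hbm
    · rcases eq_or_ne q' q with h5 | h5
      · rw [h5, hq'eq]; have := hJ₀ q; omega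
      · rw [hne q' h5]; exact hJ₀ q'
    · rcases eq_or_ne q' q with h5 | h5
      · have h2 : (I - Pi.single q 1 : Fin r → ℕ) q = I q - 1 := by
          simp [Pi.single_eq_same]
        have h4 := hI q
        rw [h5, h2, hq'eq]
        omega
      · have h2 : (I - Pi.single q 1 : Fin r → ℕ) q' = I q' := by
          simp [Pi.single_eq_of_ne h5]
        rw [h2, hne q' h5]
        exact hI q'
  · push_neg at h
    have hJeq : J₀ = fun _ => n := funext fun q => le_antisymm (hJ₀ q) (h q)
    rw [hJeq, hdiag n hn, AddSubgroup.mem_bot] at hm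
    rw [hm, smul_zero]

end Aux

/-- Let `C` be a commutative ring graded by `ℕ^r` (here `Fin r → ℕ`),
generated as a ring by the degree-`0` component together with the components in the
standard basis degrees.  Let `M` be a finitely generated `C`-module with a
`ℤ^r`-grading compatible with the grading of `C`.  If the diagonal components
`M_{nE}` (with `E = (1,…,1)`) vanish for all sufficiently large integers `n`, then
`M_J = 0` for all `J` with all coordinates sufficiently large. -/
theorem graded_module_diag_vanishing_implies_tail_vanishing
    (r : ℕ) (hr : 1 ≤ r) (C : Type*) [CommRing C]
    (𝒞 : (Fin r → ℕ) → AddSubgroup C) [GradedRing 𝒞]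
    (hgen : Subring.closure
      ((𝒞 0 : Set C) ∪ ⋃ q : Fin r, (𝒞 (Pi.single q 1) : Set C)) = ⊤)
    (M : Type*) [AddCommGroup M] [Module C M] [Module.Finite C M]
    (ℳ : (Fin r → ℤ) → AddSubgroup M) [DirectSum.Decomposition ℳ]
    (hcompat : ∀ (I : Fin r → ℕ) (J : Fin r → ℤ) (c : C) (m : M),
      c ∈ 𝒞 I → m ∈ ℳ J → c • m ∈ ℳ ((fun q => (I q : ℤ)) + J))
    (hdiag : ∃ n₀ : ℤ, ∀ n : ℤ, n₀ ≤ n → ℳ (fun _ => n) = ⊥) :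
    ∃ n₁ : ℤ, ∀ J : Fin r → ℤ, (∀ q, n₁ ≤ J q) → ℳ J = ⊥ := by
  classical
  obtain ⟨n₀, hdiag'⟩ := hdiag
  obtain ⟨s, hs⟩ := Module.Finite.fg_top (R := C) (M := M)
  set D : Finset (Fin r → ℤ) := s.biUnion (fun g => (DirectSum.decompose ℳ g).support) with hD
  set N : ℕ := D.sup (fun K => Finset.univ.sup (fun q : Fin r => (K q).toNat)) with hN
  refine ⟨max n₀ (N : ℤ), ?_⟩
  intro J hJ
  have hKbound : ∀ K ∈ D, ∀ q, K q ≤ max n₀ (N : ℤ) := by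
    intro K hK q
    have h1 : (K q).toNat ≤ N :=
      le_trans (Finset.le_sup (f := fun q : Fin r => (K q).toNat) (Finset.mem_univ q))
        (Finset.le_sup (f := fun K : Fin r → ℤ => Finset.univ.sup fun q : Fin r => (K q).toNat) hK)
    calc K q ≤ ((K q).toNat : ℤ) := Int.self_le_toNat _
      _ ≤ (N : ℤ) := Nat.cast_le.mpr h1
      _ ≤ max n₀ (N : ℤ) := le_max_right _ _
  have key : ∀ (c : C) (K : Fin r → ℤ) (m : M), m ∈ ℳ K → (∀ q, K q ≤ max n₀ (N : ℤ)) →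
      (DirectSum.decompose ℳ (c • m) J : M) = 0 := by
    intro c K m hm hK
    have hsum : c • m = ∑ A ∈ (DirectSum.decompose 𝒞 c).support,
        (DirectSum.decompose 𝒞 c A : C) • m := by
      rw [← Finset.sum_smul, DirectSum.sum_support_decompose]
    rw [hsum, DirectSum.decompose_sum, DFinsupp.finset_sum_apply,
      AddSubmonoidClass.coe_finset_sum]
    apply Finset.sum_eq_zero
    intro A hA
    have hmem := hcompat A K (DirectSum.decompose 𝒞 c A : C) m (SetLike.coe_mem _) hm
    by_cases hAK : (fun q => (A q : ℤ)) + K = J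
    · have hz : (DirectSum.decompose 𝒞 c A : C) • m = 0 := by
        refine vanish 𝒞 hgen ℳ hcompat n₀ hdiag' (max n₀ (N : ℤ)) (le_max_left _ _)
          (∑ q, ((max n₀ (N : ℤ)) - K q).toNat) K rfl hK A (fun q => ?_)
          (DirectSum.decompose 𝒞 c A : C) (SetLike.coe_mem _) m hm
        have h1 : (A q : ℤ) + K q = J q := congrFun hAK q
        rw [h1]
        exact hJ q
      rw [hz, DirectSum.decompose_zero]
      simp
    · exact DirectSum.decompose_of_mem_ne ℳ hmem hAK
  rw [eq_bot_iff]
  intro x hx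
  rw [AddSubgroup.mem_bot]
  have hx_top : x ∈ Submodule.span C (s : Set M) := by rw [hs]; trivial
  obtain ⟨f, -, hf⟩ := Submodule.mem_span_finset.mp hx_top
  have hx0 : (DirectSum.decompose ℳ x J : M) = 0 := by
    rw [← hf, DirectSum.decompose_sum, DFinsupp.finset_sum_apply,
      AddSubmonoidClass.coe_finset_sum]
    apply Finset.sum_eq_zero
    intro g hg
    have hgdecomp : f g • g = ∑ K ∈ (DirectSum.decompose ℳ g).support,
        f g • ((DirectSum.decompose ℳ g K : M)) := by
      rw [← Finset.smul_sum, DirectSum.sum_support_decompose]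
    rw [hgdecomp, DirectSum.decompose_sum, DFinsupp.finset_sum_apply,
      AddSubmonoidClass.coe_finset_sum]
    apply Finset.sum_eq_zero
    intro K hK
    exact key (f g) K (DirectSum.decompose ℳ g K : M) (SetLike.coe_mem _)
      (hKbound K (Finset.mem_biUnion.mpr ⟨g, hg, hK⟩))
  rw [← DirectSum.decompose_of_mem_same ℳ hx, hx0]
end

section
/- Let $R$ be a ring and let $P$ be a property of (left) $R$-modules that is invariant under isomorphism and has the two-out-of-three property: for every short exact sequence $0 \to M' \to M \to M'' \to 0$ of $R$-modules, if two of $M'$, $M$, $M''$ satisfy $P$, then so does the third. Let $q \geq 0$ and let $0 \to M_0 \to M_1 \to \cdots \to M_q \to 0$ be a complex of $R$-modules (composites of consecutive maps are zero) all of whose homology modules $\ker(M_i \to M_{i+1})/\operatorname{im}(M_{i-1} \to M_i)$ (for $0 \leq i \leq q$, with the convention that the maps into $M_0$ and out of $M_q$ are zero) satisfy $P$. If there is an index $j$ such that $M_i$ satisfies $P$ for all $i \neq j$, then $M_j$ also satisfies $P$. -/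
/-- Let `P` be an isomorphism-invariant property of `R`-modules with the
two-out-of-three property for short exact sequences.  Given a complex
`0 → M 0 → M 1 → ⋯ → M q → 0` (modelled by `M : ℕ → Type v` with `M i` trivial for
`i > q` and differentials `d i : M i →ₗ[R] M (i+1)`) all of whose homology modules
satisfy `P`, if `P` holds for all `M i` with `i ≤ q`, `i ≠ j` (for some `j ≤ q`),
then `P` holds for `M j` as well. -/
theorem two_out_of_three_for_complexes
    {R : Type u} [Ring R]
    (P : ∀ (N : Type v) [AddCommGroup N] [Module R N], Prop)
    (hiso : ∀ (N₁ N₂ : Type v) [AddCommGroup N₁] [Module R N₁]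
      [AddCommGroup N₂] [Module R N₂], (N₁ ≃ₗ[R] N₂) → P N₁ → P N₂)
    (h23 : ∀ (N' N N'' : Type v) [AddCommGroup N'] [Module R N']
      [AddCommGroup N] [Module R N] [AddCommGroup N''] [Module R N'']
      (f : N' →ₗ[R] N) (g : N →ₗ[R] N''),
      Function.Injective f → Function.Surjective g →
      LinearMap.range f = LinearMap.ker g →
      ((P N' → P N → P N'') ∧ (P N' → P N'' → P N) ∧ (P N → P N'' → P N')))
    (q : ℕ) (M : ℕ → Type v) [∀ i, AddCommGroup (M i)] [∀ i, Module R (M i)]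
    (d : ∀ i, M i →ₗ[R] M (i + 1))
    (hcx : ∀ i, (d (i + 1)).comp (d i) = 0)
    (htriv : ∀ i, q < i → Subsingleton (M i))
    (hH0 : P ↥(LinearMap.ker (d 0)))
    (hH : ∀ i, i + 1 ≤ q → P (↥(LinearMap.ker (d (i + 1))) ⧸
      (Submodule.comap (LinearMap.ker (d (i + 1))).subtype (LinearMap.range (d i)))))
    (j : ℕ) (hj : j ≤ q)
    (hP : ∀ i ≤ q, i ≠ j → P (M i)) :
    P (M j) := by

  -- B_{i+1} ≤ Z_{i+1}
  have hBZ : ∀ i, LinearMap.range (d i) ≤ LinearMap.ker (d (i + 1)) :=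
    fun i => LinearMap.range_le_ker_iff.mpr (hcx i)
  -- SES 0 → ker (d i) → M i → range (d i) → 0
  have hses1 : ∀ i, (P ↥(LinearMap.ker (d i)) → P (M i) → P ↥(LinearMap.range (d i))) ∧
      (P ↥(LinearMap.ker (d i)) → P ↥(LinearMap.range (d i)) → P (M i)) ∧
      (P (M i) → P ↥(LinearMap.range (d i)) → P ↥(LinearMap.ker (d i))) := by
    intro i
    exact h23 _ _ _ (LinearMap.ker (d i)).subtype (d i).rangeRestrict
      (Submodule.injective_subtype _) (d i).surjective_rangeRestrict
      (by rw [Submodule.range_subtype, LinearMap.ker_rangeRestrict])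
  -- step: P (ker (d (i+1))) ↔ P (range (d i)) when i+1 ≤ q, using P of homology
  have hstep : ∀ i, i + 1 ≤ q →
      (P ↥(LinearMap.ker (d (i + 1))) → P ↥(LinearMap.range (d i))) ∧
      (P ↥(LinearMap.range (d i)) → P ↥(LinearMap.ker (d (i + 1)))) := by
    intro i hi
    set B := Submodule.comap (LinearMap.ker (d (i + 1))).subtype (LinearMap.range (d i))
    have hses2 := h23 _ _ _ B.subtype B.mkQ (Submodule.injective_subtype _)
      (Submodule.mkQ_surjective _) (by rw [Submodule.range_subtype, Submodule.ker_mkQ])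
    have e := Submodule.comapSubtypeEquivOfLe (hBZ i)
    constructor
    · intro hZ
      exact hiso _ _ e (hses2.2.2 hZ (hH i hi))
    · intro hB
      exact hses2.2.1 (hiso _ _ e.symm hB) (hH i hi)
  -- forward induction: P (ker (d i)) for i ≤ j
  have hfwd : ∀ i, i ≤ j → P ↥(LinearMap.ker (d i)) := by
    intro i
    induction i with
    | zero => intro _; exact hH0
    | succ i ih =>
      intro h
      have hi : i ≤ j := Nat.le_of_succ_le h
      have hiq : i + 1 ≤ q := le_trans h hj
      have hMi : P (M i) := hP i (by omega) (by omega)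
      exact (hstep i hiq).2 ((hses1 i).1 (ih hi) hMi)
  -- backward induction: P (ker (d i)) for j < i ≤ q
  have hbwd : ∀ n i, i + n = q → j < i → P ↥(LinearMap.ker (d i)) := by
    intro n
    induction n with
    | zero =>
      intro i hi _
      have hq : i = q := by omega
      subst hq
      have hker : LinearMap.ker (d i) = ⊤ := by
        ext x
        simp only [LinearMap.mem_ker, Submodule.mem_top, iff_true]
        have := htriv (i + 1) (by omega)
        exact Subsingleton.elim _ _
      have hMi : P (M i) := hP i le_rfl (by omega)
      rw [hker]
      exact hiso _ _ Submodule.topEquiv.symm hMi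
    | succ n ih =>
      intro i hi hji
      have hZ : P ↥(LinearMap.ker (d (i + 1))) := ih (i + 1) (by omega) (by omega)
      have hB : P ↥(LinearMap.range (d i)) := (hstep i (by omega)).1 hZ
      have hMi : P (M i) := hP i (by omega) (by omega)
      exact (hses1 i).2.2 hMi hB
  have hZj : P ↥(LinearMap.ker (d j)) := hfwd j le_rfl
  rcases eq_or_lt_of_le hj with hjq | hjq
  · subst hjq
    have hker : LinearMap.ker (d j) = ⊤ := by
      ext x
      simp only [LinearMap.mem_ker, Submodule.mem_top, iff_true]
      have := htriv (j + 1) (by omega)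
      exact Subsingleton.elim _ _
    rw [hker] at hZj
    exact hiso _ _ Submodule.topEquiv hZj
  · have hZ : P ↥(LinearMap.ker (d (j + 1))) := hbwd (q - (j + 1)) (j + 1) (by omega) (by omega)
    have hB : P ↥(LinearMap.range (d j)) := (hstep j hjq).1 hZ
    exact (hses1 j).2.1 hZj hB
end

section
/- Let $k$ be a field of characteristic $p > 0$, let $A$ be a finitely generated commutative $k$-algebra, and let $d : A \to A$ be a $k$-linear derivation with $d \circ d = 0$. Then $\ker d$ is a $k$-subalgebra of $A$, the image $\operatorname{im} d$ is contained in $\ker d$ and is an ideal of the ring $\ker d$, and the quotient $k$-algebra $\ker d / \operatorname{im} d$ is a finitely generated $k$-algebra. -/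
/-- Let `k` be a field of characteristic `p > 0`, `A` a finitely
generated commutative `k`-algebra and `d : A → A` a `k`-linear derivation with
`d ∘ d = 0`.  Then the kernel of `d` is a `k`-subalgebra `S` of `A`, the image of
`d` is (contained in `S` and is) an ideal `I` of `S`, and the quotient `S ⧸ I` is a
finitely generated `k`-algebra. -/
theorem homology_of_derivation_finiteType
    (k : Type*) [Field k] (p : ℕ) (hp : p ≠ 0) [CharP k p]
    (A : Type*) [CommRing A] [Algebra k A] [Algebra.FiniteType k A]
    (d : Derivation k A A) (hd2 : ∀ x : A, d (d x) = 0) :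
    ∃ (S : Subalgebra k A) (I : Ideal S),
      (S : Set A) = {x : A | d x = 0} ∧
      (I : Set S) = {x : S | ∃ y : A, d y = (x : A)} ∧
      Algebra.FiniteType k (S ⧸ I) := by
  classical
  -- `d` kills `p`-th powers
  have dpow : ∀ x : A, d (x ^ p) = 0 := fun x => by
    rw [Derivation.leibniz_pow, nsmul_eq_mul, ← map_natCast (algebraMap k A) p,
      CharP.cast_eq_zero k p, map_zero, zero_mul]
  -- the kernel subalgebra
  let S : Subalgebra k A :=
    { carrier := {x : A | d x = 0}
      mul_mem' := fun {a b} ha hb => by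
        show d (a * b) = 0
        rw [d.leibniz, ha, hb, smul_zero, smul_zero, add_zero]
      add_mem' := fun {a b} ha hb => by
        show d (a + b) = 0
        rw [map_add, ha, hb, add_zero]
      algebraMap_mem' := fun r => by
        show d (algebraMap k A r) = 0
        exact d.map_algebraMap r }
  have memS : ∀ x : A, x ∈ S ↔ d x = 0 := fun x => Iff.rfl
  -- the image ideal
  let I : Ideal S :=
    { carrier := {x : S | ∃ y : A, d y = (x : A)}
      zero_mem' := ⟨0, by simp⟩
      add_mem' := by
        rintro a b ⟨y, hy⟩ ⟨z, hz⟩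
        exact ⟨y + z, by rw [map_add, hy, hz]; rfl⟩
      smul_mem' := by
        rintro c x ⟨y, hy⟩
        refine ⟨(c : A) * y, ?_⟩
        have hc : d (c : A) = 0 := c.2
        rw [d.leibniz, hc, smul_zero, add_zero, smul_eq_mul, hy]
        rfl }
  refine ⟨S, I, rfl, rfl, ?_⟩
  -- it now suffices to show `S` is a finitely generated algebra
  suffices hS : Algebra.FiniteType k S by
    exact hS.of_surjective (Ideal.Quotient.mkₐ k I) (Ideal.Quotient.mkₐ_surjective k I)
  -- generators of A
  obtain ⟨s, hs⟩ := (inferInstance : Algebra.FiniteType k A).out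
  -- the subalgebra generated by p-th powers of the generators
  set T : Subalgebra k A := Algebra.adjoin k ((· ^ p) '' (s : Set A)) with hTdef
  have hT_le : T ≤ S := by
    apply Algebra.adjoin_le
    rintro _ ⟨x, -, rfl⟩
    exact dpow x
  -- T is a finitely generated algebra, hence Noetherian
  have hTfg : T.FG := Subalgebra.fg_def.2
    ⟨(· ^ p) '' (s : Set A), (s.finite_toSet.image _), rfl⟩
  have hTft : Algebra.FiniteType k T := (Subalgebra.fg_iff_finiteType T).1 hTfg
  have hTnoeth : IsNoetherianRing T := hTft.isNoetherianRing k T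
  -- A is integral over T via the generators, hence module-finite over T
  have hint : ∀ x ∈ (s : Set A), IsIntegral T x := by
    intro x hx
    have hxp : x ^ p ∈ T := Algebra.subset_adjoin ⟨x, hx, rfl⟩
    refine ⟨Polynomial.X ^ p - Polynomial.C (⟨x ^ p, hxp⟩ : T),
      Polynomial.monic_X_pow_sub_C _ hp, ?_⟩
    simp only [Polynomial.eval₂_sub, Polynomial.eval₂_pow, Polynomial.eval₂_X,
      Polynomial.eval₂_C]
    exact sub_eq_zero_of_eq rfl
  have hadjT : Algebra.adjoin T (s : Set A) = ⊤ := by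
    rw [eq_top_iff]
    intro x _
    have hx : x ∈ Algebra.adjoin k (s : Set A) := hs ▸ Algebra.mem_top
    have : Algebra.adjoin k (s : Set A) ≤
        (Algebra.adjoin T (s : Set A)).restrictScalars k :=
      Algebra.adjoin_le Algebra.subset_adjoin
    exact this hx
  have hAfin : Module.Finite T A := by
    constructor
    have := fg_adjoin_of_finite (R := T) s.finite_toSet hint
    rwa [hadjT, Algebra.top_toSubmodule] at this
  have hAnoeth : IsNoetherian T A := inferInstance
  -- kernel of d as a T-submodule; it is finitely generated
  have hdT : ∀ (t : T) (x : A), d ((t : A) * x) = (t : A) * d x := by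
    intro t x
    have ht : d (t : A) = 0 := hT_le t.2
    rw [d.leibniz, ht, smul_zero, add_zero, smul_eq_mul]
  set K : Submodule T A :=
    { carrier := {x : A | d x = 0}
      add_mem' := fun {a b} ha hb => by
        show d (a + b) = 0
        rw [map_add, ha, hb, add_zero]
      zero_mem' := by show d 0 = 0; simp
      smul_mem' := fun t x hx => by
        show d ((t : A) * x) = 0
        rw [hdT, hx, mul_zero] } with hKdef
  obtain ⟨g, hg⟩ : K.FG := IsNoetherian.noetherian K
  -- S is generated as a k-algebra by the p-th powers together with g
  have hSeq : Algebra.adjoin k (((· ^ p) '' (s : Set A)) ∪ (g : Set A)) = S := by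
    apply le_antisymm
    · apply Algebra.adjoin_le
      rintro x (⟨y, -, rfl⟩ | hx)
      · exact dpow y
      · have : x ∈ K := hg ▸ Submodule.subset_span hx
        exact this
    · intro x hx
      have hxK : x ∈ Submodule.span T (g : Set A) := by rw [hg]; exact hx
      refine Submodule.span_induction ?_ ?_ ?_ ?_ hxK
      · intro y hy
        exact Algebra.subset_adjoin (Set.mem_union_right _ hy)
      · exact Subalgebra.zero_mem _
      · intro y z _ _ hy hz
        exact Subalgebra.add_mem _ hy hz
      · intro t y _ hy
        show (t : A) * y ∈ _
        refine Subalgebra.mul_mem _ ?_ hy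
        have : (t : A) ∈ T := t.2
        exact Algebra.adjoin_mono Set.subset_union_left this
  have hSfg : S.FG := Subalgebra.fg_def.2
    ⟨((· ^ p) '' (s : Set A)) ∪ (g : Set A),
      (s.finite_toSet.image _).union g.finite_toSet, hSeq⟩
  exact (Subalgebra.fg_iff_finiteType S).1 hSfg
end
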